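/- Let L, T > 0, let m, n be real numbers, let S̄ : [0,L] → ℝ be bounded and measurable, and let (h,s) be a classical solution of the tear-film system with exponents (m,n) on [0,L]×[0,T]. Then the total non-conservative loss satisfies ∫₀^T ∫₀^L h(x,t)ᵐ (S̄(x) − s(x,t)) dx dt = ∫₀^L h(x,0) dx − ∫₀^L h(x,T) dx, and in particular, since h > 0, it is bounded above by ∫₀^L h(x,0) dx. -/

import Mathlib

open Set MeasureTheory intervalIntegral Filter

open Set MeasureTheory

/-- A classical solution of the tear-film system
`h_t = −(hⁿ h_{xxx})_x − hᵐ(S̄ − s)`,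
`s_t = s_{xx} + (h_x/h − h^{n−1} h_{xxx}) s_x + s(S̄ − s) h^{m−1}`
on `[0,L] × [0,T]`, with `h > 0`, `h` four times and `s` twice continuously
differentiable in `x`, both continuously differentiable in `t` (all partial
derivatives jointly continuous), subject to the boundary conditions
`h_x = h_{xxx} = s_x = 0` at `x = 0` and `x = L`. -/
structure TearFilmSolution (L T m n : ℝ) (Sbar : ℝ → ℝ) where
  h : ℝ → ℝ → ℝ
  s : ℝ → ℝ → ℝ
  hx : ℝ → ℝ → ℝ
  hxx : ℝ → ℝ → ℝ
  hxxx : ℝ → ℝ → ℝ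
  hxxxx : ℝ → ℝ → ℝ
  ht : ℝ → ℝ → ℝ
  sx : ℝ → ℝ → ℝ
  sxx : ℝ → ℝ → ℝ
  st : ℝ → ℝ → ℝ
  h_pos : ∀ x ∈ Icc 0 L, ∀ t ∈ Icc 0 T, 0 < h x t
  hasDeriv_hx : ∀ t ∈ Icc 0 T, ∀ x ∈ Icc 0 L,
    HasDerivWithinAt (fun x' => h x' t) (hx x t) (Icc 0 L) x
  hasDeriv_hxx : ∀ t ∈ Icc 0 T, ∀ x ∈ Icc 0 L,
    HasDerivWithinAt (fun x' => hx x' t) (hxx x t) (Icc 0 L) x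
  hasDeriv_hxxx : ∀ t ∈ Icc 0 T, ∀ x ∈ Icc 0 L,
    HasDerivWithinAt (fun x' => hxx x' t) (hxxx x t) (Icc 0 L) x
  hasDeriv_hxxxx : ∀ t ∈ Icc 0 T, ∀ x ∈ Icc 0 L,
    HasDerivWithinAt (fun x' => hxxx x' t) (hxxxx x t) (Icc 0 L) x
  hasDeriv_ht : ∀ x ∈ Icc 0 L, ∀ t ∈ Icc 0 T,
    HasDerivWithinAt (fun t' => h x t') (ht x t) (Icc 0 T) t
  hasDeriv_sx : ∀ t ∈ Icc 0 T, ∀ x ∈ Icc 0 L,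
    HasDerivWithinAt (fun x' => s x' t) (sx x t) (Icc 0 L) x
  hasDeriv_sxx : ∀ t ∈ Icc 0 T, ∀ x ∈ Icc 0 L,
    HasDerivWithinAt (fun x' => sx x' t) (sxx x t) (Icc 0 L) x
  hasDeriv_st : ∀ x ∈ Icc 0 L, ∀ t ∈ Icc 0 T,
    HasDerivWithinAt (fun t' => s x t') (st x t) (Icc 0 T) t
  cont_h : ContinuousOn (fun p : ℝ × ℝ => h p.1 p.2) (Icc 0 L ×ˢ Icc 0 T)
  cont_s : ContinuousOn (fun p : ℝ × ℝ => s p.1 p.2) (Icc 0 L ×ˢ Icc 0 T)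
  cont_hx : ContinuousOn (fun p : ℝ × ℝ => hx p.1 p.2) (Icc 0 L ×ˢ Icc 0 T)
  cont_hxx : ContinuousOn (fun p : ℝ × ℝ => hxx p.1 p.2) (Icc 0 L ×ˢ Icc 0 T)
  cont_hxxx : ContinuousOn (fun p : ℝ × ℝ => hxxx p.1 p.2) (Icc 0 L ×ˢ Icc 0 T)
  cont_hxxxx : ContinuousOn (fun p : ℝ × ℝ => hxxxx p.1 p.2) (Icc 0 L ×ˢ Icc 0 T)
  cont_ht : ContinuousOn (fun p : ℝ × ℝ => ht p.1 p.2) (Icc 0 L ×ˢ Icc 0 T)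
  cont_sx : ContinuousOn (fun p : ℝ × ℝ => sx p.1 p.2) (Icc 0 L ×ˢ Icc 0 T)
  cont_sxx : ContinuousOn (fun p : ℝ × ℝ => sxx p.1 p.2) (Icc 0 L ×ˢ Icc 0 T)
  cont_st : ContinuousOn (fun p : ℝ × ℝ => st p.1 p.2) (Icc 0 L ×ˢ Icc 0 T)
  pde_h : ∀ x ∈ Icc 0 L, ∀ t ∈ Icc 0 T,
    ht x t = -(n * h x t ^ (n - 1) * hx x t * hxxx x t + h x t ^ n * hxxxx x t)
      - h x t ^ m * (Sbar x - s x t)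
  pde_s : ∀ x ∈ Icc 0 L, ∀ t ∈ Icc 0 T,
    st x t = sxx x t + (hx x t / h x t - h x t ^ (n - 1) * hxxx x t) * sx x t
      + s x t * (Sbar x - s x t) * h x t ^ (m - 1)
  bc : ∀ t ∈ Icc 0 T,
    hx 0 t = 0 ∧ hx L t = 0 ∧ hxxx 0 t = 0 ∧ hxxx L t = 0 ∧ sx 0 t = 0 ∧ sx L t = 0


/-- The total non-conservative loss equals the loss of fluid mass and is bounded
above by the initial fluid mass. -/
theorem total_nonconservative_loss
    (L T m n : ℝ) (hL : 0 < L) (hT : 0 < T)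
    (Sbar : ℝ → ℝ) (hSmeas : Measurable Sbar)
    (hSbdd : ∃ C : ℝ, ∀ x ∈ Icc (0:ℝ) L, |Sbar x| ≤ C)
    (sol : TearFilmSolution L T m n Sbar) :
    (∫ t in (0:ℝ)..T, ∫ x in (0:ℝ)..L, sol.h x t ^ m * (Sbar x - sol.s x t))
        = (∫ x in (0:ℝ)..L, sol.h x 0) - ∫ x in (0:ℝ)..L, sol.h x T ∧
    (∫ t in (0:ℝ)..T, ∫ x in (0:ℝ)..L, sol.h x t ^ m * (Sbar x - sol.s x t))
        ≤ ∫ x in (0:ℝ)..L, sol.h x 0 := by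
  
  have hT' : (0:ℝ) ≤ T := hT.le
  have hL' : (0:ℝ) ≤ L := hL.le
  -- section continuity helpers
  have csec_t : ∀ {f : ℝ → ℝ → ℝ}, ContinuousOn (fun p : ℝ × ℝ => f p.1 p.2)
      (Icc 0 L ×ˢ Icc 0 T) → ∀ x ∈ Icc (0:ℝ) L, ContinuousOn (fun t => f x t) (Icc 0 T) :=
    fun cf x hx => cf.comp ((Continuous.prodMk_right x).continuousOn) (fun t htt => ⟨hx, htt⟩)
  have csec_x : ∀ {f : ℝ → ℝ → ℝ}, ContinuousOn (fun p : ℝ × ℝ => f p.1 p.2)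
      (Icc 0 L ×ˢ Icc 0 T) → ∀ t ∈ Icc (0:ℝ) T, ContinuousOn (fun x => f x t) (Icc 0 L) :=
    fun cf t htt => cf.comp ((continuous_id.prodMk continuous_const).continuousOn)
      (fun x hx => ⟨hx, htt⟩)
  -- interval integrability of x-sections of ht
  have intInt_ht : ∀ t ∈ Icc (0:ℝ) T, IntervalIntegrable (fun x => sol.ht x t) volume 0 L := by
    intro t htt
    apply ContinuousOn.intervalIntegrable
    rw [uIcc_of_le hL']
    exact csec_x sol.cont_ht t htt
  -- the divergence term integrates to zero
  have divzero : ∀ t ∈ Icc (0:ℝ) T,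
      (∫ x in (0:ℝ)..L, (n * sol.h x t ^ (n - 1) * sol.hx x t * sol.hxxx x t
        + sol.h x t ^ n * sol.hxxxx x t)) = 0 := by
    intro t htt
    have derivg : ∀ x ∈ Icc (0:ℝ) L,
        HasDerivWithinAt (fun x' => sol.h x' t ^ n * sol.hxxx x' t)
          (n * sol.h x t ^ (n - 1) * sol.hx x t * sol.hxxx x t
            + sol.h x t ^ n * sol.hxxxx x t) (Icc 0 L) x := by
      intro x hx
      have hpos := sol.h_pos x hx t htt
      have d1 : HasDerivWithinAt (fun x' => sol.h x' t ^ n)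
          (sol.hx x t * n * sol.h x t ^ (n - 1)) (Icc 0 L) x :=
        (sol.hasDeriv_hx t htt x hx).rpow_const (Or.inl hpos.ne')
      have := d1.mul (sol.hasDeriv_hxxxx t htt x hx)
      exact this.congr_deriv (by ring)
    have contg : ContinuousOn (fun x' => sol.h x' t ^ n * sol.hxxx x' t) (Icc 0 L) :=
      fun x hx => (derivg x hx).continuousWithinAt
    have intIntD : IntervalIntegrable
        (fun x => n * sol.h x t ^ (n - 1) * sol.hx x t * sol.hxxx x t
          + sol.h x t ^ n * sol.hxxxx x t) volume 0 L := by
      apply ContinuousOn.intervalIntegrable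
      rw [uIcc_of_le hL']
      have ch := csec_x sol.cont_h t htt
      have chx := csec_x sol.cont_hx t htt
      have chxxx := csec_x sol.cont_hxxx t htt
      have chxxxx := csec_x sol.cont_hxxxx t htt
      have hne : ∀ x ∈ Icc (0:ℝ) L, sol.h x t ≠ 0 :=
        fun x hx => (sol.h_pos x hx t htt).ne'
      exact (((continuousOn_const.mul (ch.rpow_const (fun x hx => Or.inl (hne x hx)))).mul
        chx).mul chxxx).add ((ch.rpow_const (fun x hx => Or.inl (hne x hx))).mul chxxxx)
    have ftc := integral_eq_sub_of_hasDeriv_right_of_le hL' contg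
      (fun x hx => ((derivg x ⟨hx.1.le, hx.2.le⟩).hasDerivAt
        (Icc_mem_nhds hx.1 hx.2)).hasDerivWithinAt)
      intIntD
    rw [ftc]
    obtain ⟨-, -, b0, bL, -, -⟩ := sol.bc t htt
    rw [b0, bL]
    ring
  -- inner equality: the loss term equals minus the integral of ht
  have inner_eq : ∀ t ∈ Icc (0:ℝ) T,
      (∫ x in (0:ℝ)..L, sol.h x t ^ m * (Sbar x - sol.s x t))
        = -∫ x in (0:ℝ)..L, sol.ht x t := by
    intro t htt
    have e1 : (∫ x in (0:ℝ)..L, sol.h x t ^ m * (Sbar x - sol.s x t))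
        = ∫ x in (0:ℝ)..L, (-sol.ht x t
            - (n * sol.h x t ^ (n - 1) * sol.hx x t * sol.hxxx x t
              + sol.h x t ^ n * sol.hxxxx x t)) := by
      apply intervalIntegral.integral_congr
      intro x hx
      rw [uIcc_of_le hL'] at hx
      have := sol.pde_h x hx t htt
      dsimp only
      linarith [this]
    rw [e1]
    have intIntD : IntervalIntegrable
        (fun x => n * sol.h x t ^ (n - 1) * sol.hx x t * sol.hxxx x t
          + sol.h x t ^ n * sol.hxxxx x t) volume 0 L := by
      apply ContinuousOn.intervalIntegrable
      rw [uIcc_of_le hL']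
      have ch := csec_x sol.cont_h t htt
      have hne : ∀ x ∈ Icc (0:ℝ) L, sol.h x t ≠ 0 :=
        fun x hx => (sol.h_pos x hx t htt).ne'
      exact (((continuousOn_const.mul (ch.rpow_const (fun x hx => Or.inl (hne x hx)))).mul
        (csec_x sol.cont_hx t htt)).mul (csec_x sol.cont_hxxx t htt)).add
        ((ch.rpow_const (fun x hx => Or.inl (hne x hx))).mul (csec_x sol.cont_hxxxx t htt))
    have hnegint : IntervalIntegrable (fun x => -sol.ht x t) volume 0 L :=
      (intInt_ht t htt).neg
    rw [intervalIntegral.integral_sub hnegint intIntD,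
      intervalIntegral.integral_neg, divzero t htt]
    ring
  -- Fubini for ht
  have contsw : ContinuousOn (fun p : ℝ × ℝ => sol.ht p.2 p.1) (Icc 0 T ×ˢ Icc 0 L) :=
    sol.cont_ht.comp continuous_swap.continuousOn (fun p hp => ⟨hp.2, hp.1⟩)
  have hint : Integrable (Function.uncurry fun t x => sol.ht x t)
      ((volume.restrict (Ioc (0:ℝ) T)).prod (volume.restrict (Ioc (0:ℝ) L))) := by
    rw [Measure.prod_restrict]
    exact (contsw.integrableOn_compact (isCompact_Icc.prod isCompact_Icc)).mono_set
      (Set.prod_mono Ioc_subset_Icc_self Ioc_subset_Icc_self)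
  have swap : (∫ t in (0:ℝ)..T, ∫ x in (0:ℝ)..L, sol.ht x t)
      = ∫ x in (0:ℝ)..L, ∫ t in (0:ℝ)..T, sol.ht x t := by
    simp only [intervalIntegral.integral_of_le hT', intervalIntegral.integral_of_le hL']
    exact MeasureTheory.integral_integral_swap hint
  -- FTC in t
  have ftc_t : ∀ x ∈ Icc (0:ℝ) L, (∫ t in (0:ℝ)..T, sol.ht x t) = sol.h x T - sol.h x 0 := by
    intro x hx
    refine integral_eq_sub_of_hasDeriv_right_of_le hT'
      (fun t htt => (sol.hasDeriv_ht x hx t htt).continuousWithinAt) (fun t htt => ?_) ?_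
    · exact ((sol.hasDeriv_ht x hx t ⟨htt.1.le, htt.2.le⟩).hasDerivAt
        (Icc_mem_nhds htt.1 htt.2)).hasDerivWithinAt
    · apply ContinuousOn.intervalIntegrable
      rw [uIcc_of_le hT']
      exact csec_t sol.cont_ht x hx
  have iT : IntervalIntegrable (fun x => sol.h x T) volume 0 L := by
    apply ContinuousOn.intervalIntegrable
    rw [uIcc_of_le hL']
    exact csec_x sol.cont_h T (right_mem_Icc.2 hT')
  have i0 : IntervalIntegrable (fun x => sol.h x 0) volume 0 L := by
    apply ContinuousOn.intervalIntegrable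
    rw [uIcc_of_le hL']
    exact csec_x sol.cont_h 0 (left_mem_Icc.2 hT')
  have main : (∫ t in (0:ℝ)..T, ∫ x in (0:ℝ)..L, sol.h x t ^ m * (Sbar x - sol.s x t))
      = (∫ x in (0:ℝ)..L, sol.h x 0) - ∫ x in (0:ℝ)..L, sol.h x T := by
    have e2 : (∫ t in (0:ℝ)..T, ∫ x in (0:ℝ)..L, sol.h x t ^ m * (Sbar x - sol.s x t))
        = ∫ t in (0:ℝ)..T, -∫ x in (0:ℝ)..L, sol.ht x t := by
      apply intervalIntegral.integral_congr
      intro t htt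
      rw [uIcc_of_le hT'] at htt
      exact inner_eq t htt
    rw [e2, intervalIntegral.integral_neg, swap]
    have e3 : (∫ x in (0:ℝ)..L, ∫ t in (0:ℝ)..T, sol.ht x t)
        = ∫ x in (0:ℝ)..L, (sol.h x T - sol.h x 0) := by
      apply intervalIntegral.integral_congr
      intro x hx
      rw [uIcc_of_le hL'] at hx
      exact ftc_t x hx
    rw [e3, intervalIntegral.integral_sub iT i0]
    ring
  refine ⟨main, ?_⟩
  rw [main]
  have hTpos : (0:ℝ) ≤ ∫ x in (0:ℝ)..L, sol.h x T := by
    apply intervalIntegral.integral_nonneg hL'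
    intro x hx
    exact (sol.h_pos x hx T (right_mem_Icc.2 hT')).le
  linarith
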